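/- Let p be a prime and 0 < α < 1. Define c_α = (1 - p^α)/(1 - p^{-α-1}), d_α = (1 - p^{-α})/(1 - p^{α-1}), and define R : ℚ_p → ℝ by R(τ) = 1 - (1 - 1/p)·(1/(1 - p^{-α}))·|τ|_p^{α-1} for 0 ≠ |τ|_p < 1 and R(τ) = 0 for |τ|_p ≥ 1. Then the integral of c_α·d_α·R(τ) over ℚ_p with respect to the normalized Haar measure equals 1. -/

import Mathlib

open MeasureTheory Topology Filter
open scoped ENNReal

noncomputable instance (p : ℕ) [Fact p.Prime] : MeasurableSpace ℚ_[p] := borel _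
instance (p : ℕ) [Fact p.Prime] : BorelSpace ℚ_[p] := ⟨rfl⟩

/-- The closed unit ball of `ℚ_[p]` as a positive compact set. -/
noncomputable def padicUnitBall (p : ℕ) [Fact p.Prime] :
    TopologicalSpace.PositiveCompacts ℚ_[p] where
  carrier := {x : ℚ_[p] | ‖x‖ ≤ 1}
  isCompact' := by
    have h : {x : ℚ_[p] | ‖x‖ ≤ 1} = Metric.closedBall 0 1 := by
      ext x; simp [dist_eq_norm]
    rw [h]
    exact isCompact_closedBall 0 1
  interior_nonempty' := by
    refine ⟨0, ?_⟩
    have h : Metric.ball (0 : ℚ_[p]) 1 ⊆ {x : ℚ_[p] | ‖x‖ ≤ 1} := by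
      intro x hx
      simp only [Metric.mem_ball, dist_eq_norm, sub_zero] at hx
      exact le_of_lt hx
    exact interior_maximal h Metric.isOpen_ball (Metric.mem_ball_self one_pos)

/-- The Haar measure on `ℚ_[p]`, normalized so that `ℤ_[p]` has measure 1. -/
noncomputable def padicHaar (p : ℕ) [Fact p.Prime] : Measure ℚ_[p] :=
  Measure.addHaarMeasure (padicUnitBall p)

variable (p : ℕ) [Fact p.Prime]

lemma ballMeas (c : ℝ) : MeasurableSet {x : ℚ_[p] | ‖x‖ ≤ c} :=
  measurableSet_le (measurable_norm) measurable_const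

instance : (padicHaar p).IsAddHaarMeasure := Measure.isAddHaarMeasure_addHaarMeasure _

lemma padicHaar_ball_zero : padicHaar p {x : ℚ_[p] | ‖x‖ ≤ 1} = 1 :=
  Measure.addHaarMeasure_self (K₀ := padicUnitBall p)

lemma padicHaar_ball (n : ℕ) :
    padicHaar p {x : ℚ_[p] | ‖x‖ ≤ (p:ℝ)^(-(n:ℤ))} = ((p : ℝ≥0∞))⁻¹ ^ n := by
  have hp1 : (1:ℝ) < (p:ℝ) := by exact_mod_cast (Fact.out : p.Prime).one_lt
  set μ := padicHaar p with hμ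
  set c : ℝ := (p:ℝ)^(-(n:ℤ)) with hc
  set B : Set ℚ_[p] := {x : ℚ_[p] | ‖x‖ ≤ c} with hB
  have hcover : {x : ℚ_[p] | ‖x‖ ≤ 1} = ⋃ j ∈ Finset.range (p ^ n),
      {x : ℚ_[p] | ‖x - (j:ℚ_[p])‖ ≤ c} := by
    ext x
    simp only [Set.mem_setOf_eq, Set.mem_iUnion, Finset.mem_range, exists_prop]
    constructor
    · intro hx
      set z : ℤ_[p] := ⟨x, hx⟩ with hz
      refine ⟨z.appr n, z.appr_lt n, ?_⟩
      have h1 : ‖z - (z.appr n : ℤ_[p])‖ ≤ (p:ℝ)^(-(n:ℤ)) :=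
        ((z - z.appr n).norm_le_pow_iff_mem_span_pow n).mpr (z.appr_spec n)
      have h2 : ((z - (z.appr n : ℤ_[p]) : ℤ_[p]) : ℚ_[p]) = x - (z.appr n : ℚ_[p]) := by
        push_cast [hz]
        rfl
      rw [← PadicInt.padic_norm_e_of_padicInt, h2] at h1
      exact h1
    · intro ⟨j, hj, hxj⟩
      have hj1 : ‖(j : ℚ_[p])‖ ≤ 1 := Padic.norm_int_le_one _
      have : x = (x - j) + j := by ring
      rw [this]
      refine le_trans (Padic.nonarchimedean _ _) (max_le ?_ hj1)
      exact le_trans hxj (zpow_le_one_of_nonpos₀ (le_of_lt hp1) (by omega))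
  have hmeasT : ∀ j : ℕ, MeasurableSet {x : ℚ_[p] | ‖x - (j:ℚ_[p])‖ ≤ c} := by
    intro j
    exact measurableSet_le ((measurable_id.sub measurable_const).norm) measurable_const
  have htrans : ∀ j : ℕ, μ {x : ℚ_[p] | ‖x - (j:ℚ_[p])‖ ≤ c} = μ B := by
    intro j
    have h : {x : ℚ_[p] | ‖x - (j:ℚ_[p])‖ ≤ c} = (fun x => x + (-(j:ℚ_[p]))) ⁻¹' B := by
      ext x; simp [hB, sub_eq_add_neg]
    rw [h, measure_preimage_add_right]
  have hdisj : (↑(Finset.range (p ^ n)) : Set ℕ).Pairwise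
      (Function.onFun Disjoint fun j => {x : ℚ_[p] | ‖x - (j:ℚ_[p])‖ ≤ c}) := by
    intro i hi j hj hij
    simp only [Finset.coe_range, Set.mem_Iio] at hi hj
    refine Set.disjoint_left.mpr fun x hxi hxj => hij ?_
    simp only [Set.mem_setOf_eq] at hxi hxj
    have h1 : ‖(((i:ℤ) - (j:ℤ) : ℤ) : ℚ_[p])‖ ≤ (p:ℝ)^(-(n:ℤ)) := by
      have hcast : ((((i:ℤ) - (j:ℤ) : ℤ)) : ℚ_[p]) = ((i:ℚ_[p]) - x) + (x - j) := by
        push_cast; ring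
      rw [hcast]
      refine le_trans (Padic.nonarchimedean _ _) (max_le ?_ hxj)
      rw [norm_sub_rev]; exact hxi
    rw [Padic.norm_int_le_pow_iff_dvd] at h1
    have h2 : ((i:ℤ) - j).natAbs < p ^ n := by omega
    have h0 : ((i:ℤ) - j) = 0 := by
      refine Int.eq_zero_of_abs_lt_dvd h1 ?_
      rw [Int.abs_eq_natAbs]
      exact_mod_cast h2
    omega
  have hsum : μ {x : ℚ_[p] | ‖x‖ ≤ 1} = (p ^ n : ℕ) * μ B := by
    rw [hcover, measure_biUnion_finset hdisj (fun j _ => hmeasT j)]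
    simp [htrans, Finset.sum_const, Finset.card_range]
  rw [padicHaar_ball_zero] at hsum
  have hpn0 : ((p ^ n : ℕ) : ℝ≥0∞) ≠ 0 := by
    simp [pow_ne_zero, (Fact.out : p.Prime).pos.ne']
  have hpnt : ((p ^ n : ℕ) : ℝ≥0∞) ≠ ⊤ := by simp
  have : μ B = ((p ^ n : ℕ) : ℝ≥0∞)⁻¹ := by
    calc μ B = (((p ^ n : ℕ) : ℝ≥0∞)⁻¹ * ((p ^ n : ℕ) : ℝ≥0∞)) * μ B := by
          rw [ENNReal.inv_mul_cancel hpn0 hpnt, one_mul]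
      _ = ((p ^ n : ℕ) : ℝ≥0∞)⁻¹ * (((p ^ n : ℕ) : ℝ≥0∞) * μ B) := by rw [mul_assoc]
      _ = ((p ^ n : ℕ) : ℝ≥0∞)⁻¹ := by rw [← hsum, mul_one]
  rw [this]
  push_cast
  rw [ENNReal.inv_pow]

lemma padic_norm_discrete (x : ℚ_[p]) (k : ℤ) (h1 : ‖x‖ ≤ (p:ℝ)^k) (h2 : ‖x‖ ≠ (p:ℝ)^k) :
    ‖x‖ ≤ (p:ℝ)^(k-1) := by
  have hp1 : (1:ℝ) < (p:ℝ) := by exact_mod_cast (Fact.out : p.Prime).one_lt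
  rcases eq_or_ne x 0 with rfl | hx
  · simp only [norm_zero]
    positivity
  · rw [Padic.norm_eq_zpow_neg_valuation hx] at h1 h2 ⊢
    rw [zpow_le_zpow_iff_right₀ hp1] at h1 ⊢
    rcases lt_or_eq_of_le h1 with h | h
    · omega
    · exact absurd (by rw [h]) h2

lemma padicHaar_sphere (k : ℕ) :
    padicHaar p {x : ℚ_[p] | ‖x‖ = (p:ℝ)^(-(k:ℤ))}
      = ENNReal.ofReal ((p:ℝ)^(-(k:ℤ)) - (p:ℝ)^(-(k:ℤ)-1)) := by
  have hp1 : (1:ℝ) < (p:ℝ) := by exact_mod_cast (Fact.out : p.Prime).one_lt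
  have hp0 : (0:ℝ) < (p:ℝ) := lt_trans one_pos hp1
  have hSeq : {x : ℚ_[p] | ‖x‖ = (p:ℝ)^(-(k:ℤ))}
      = {x : ℚ_[p] | ‖x‖ ≤ (p:ℝ)^(-(k:ℤ))} \ {x : ℚ_[p] | ‖x‖ ≤ (p:ℝ)^(-((k+1:ℕ):ℤ))} := by
    ext x
    simp only [Set.mem_setOf_eq, Set.mem_diff]
    constructor
    · intro hx
      refine ⟨le_of_eq hx, ?_⟩
      rw [hx, not_le]
      apply zpow_lt_zpow_right₀ hp1
      omega
    · intro ⟨hle, hnle⟩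
      by_contra hne
      have := padic_norm_discrete p x (-(k:ℤ)) hle hne
      apply hnle
      convert this using 2
      push_cast; ring
  rw [hSeq, measure_diff]
  · rw [padicHaar_ball, padicHaar_ball]
    have hcast : ∀ m : ℕ, ((p:ℝ≥0∞))⁻¹ ^ m = ENNReal.ofReal ((p:ℝ)^(-(m:ℤ))) := by
      intro m
      rw [zpow_neg, zpow_natCast, ← inv_pow, ENNReal.ofReal_pow (by positivity)]
      congr 1
      rw [ENNReal.ofReal_inv_of_pos hp0, ENNReal.ofReal_natCast]
    rw [hcast, hcast, ← ENNReal.ofReal_sub _ (by positivity)]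
    congr 1
    push_cast
    ring_nf
  · intro x hx
    simp only [Set.mem_setOf_eq] at hx ⊢
    refine le_trans hx (zpow_le_zpow_right₀ (le_of_lt hp1) (by omega))
  · exact (ballMeas p _).nullMeasurableSet
  · rw [padicHaar_ball]
    exact ENNReal.pow_ne_top (by simp [ENNReal.inv_ne_top, (Fact.out : p.Prime).pos.ne'])
lemma key_identity (q r : ℝ) (hq : 1 < q) (hr0 : 0 < r) (hr1 : r < 1) (hqr : q * r < 1) :
    ((1 - q) / (1 - q⁻¹ * r) * ((1 - q⁻¹) / (1 - q * r)) * (1 - r)) * (r * (1 - r)⁻¹)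
      - ((1 - q) / (1 - q⁻¹ * r) * ((1 - q⁻¹) / (1 - q * r)) * (1 - r)
          * ((1 - r) * (1 / (1 - q⁻¹)))) * (q⁻¹ * (1 - q⁻¹)⁻¹) = 1 := by
  have hq0 : q ≠ 0 := by positivity
  have hqi : q⁻¹ < 1 := by rw [inv_lt_one_iff₀]; right; exact hq
  have h1 : 1 - q⁻¹ ≠ 0 := by nlinarith
  have h2 : 1 - r ≠ 0 := by nlinarith
  have h3 : 1 - q * r ≠ 0 := by nlinarith
  have h4 : q - r ≠ 0 := by nlinarith
  have h5 : q - 1 ≠ 0 := by nlinarith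
  have e4 : 1 - q⁻¹ * r = (q - r) / q := by field_simp
  have e1 : 1 - q⁻¹ = (q - 1) / q := by field_simp
  rw [e4, e1, inv_eq_one_div]
  field_simp
  ring

theorem stmt10 (p : ℕ) [Fact p.Prime] (α : ℝ) (hα0 : 0 < α) (hα1 : α < 1)
    (R : ℚ_[p] → ℝ)
    (hRlt : ∀ τ : ℚ_[p], τ ≠ 0 → ‖τ‖ < 1 →
      R τ = 1 - (1 - 1 / (p : ℝ)) * (1 / (1 - (p : ℝ) ^ (-α))) * ‖τ‖ ^ (α - 1))
    (hRge : ∀ τ : ℚ_[p], 1 ≤ ‖τ‖ → R τ = 0) :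
    ∫ τ : ℚ_[p],
        ((1 - (p : ℝ) ^ α) / (1 - (p : ℝ) ^ (-α - 1)))
          * ((1 - (p : ℝ) ^ (-α)) / (1 - (p : ℝ) ^ (α - 1))) * R τ ∂(padicHaar p) = 1 := by
  classical
  have hp1 : (1:ℝ) < (p:ℝ) := by exact_mod_cast (Fact.out : p.Prime).one_lt
  have hp0 : (0:ℝ) < (p:ℝ) := lt_trans one_pos hp1
  set q : ℝ := (p:ℝ) ^ α with hqdef
  set r : ℝ := (p:ℝ)⁻¹ with hrdef
  have hq1 : 1 < q := (Real.one_lt_rpow_iff_of_pos hp0).mpr (Or.inl ⟨hp1, hα0⟩)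
  have hq0 : (0:ℝ) < q := lt_trans one_pos hq1
  have hr0 : (0:ℝ) < r := inv_pos.mpr hp0
  have hr1 : r < 1 := by rw [hrdef, inv_lt_one_iff₀]; right; exact hp1
  have hpma_eq : (p:ℝ) ^ (-α) = q⁻¹ := by rw [Real.rpow_neg hp0.le, hqdef]
  have hpam_eq : (p:ℝ) ^ (α - 1) = q * r := by
    rw [show α - 1 = α + -1 by ring, Real.rpow_add hp0, Real.rpow_neg_one, hqdef, hrdef]
  have hpmam_eq : (p:ℝ) ^ (-α - 1) = q⁻¹ * r := by
    rw [show -α - 1 = -α + -1 by ring, Real.rpow_add hp0, Real.rpow_neg_one, hpma_eq, hrdef]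
  have hqr1 : q * r < 1 := by
    rw [← hpam_eq]; exact Real.rpow_lt_one_of_one_lt_of_neg hp1 (by linarith)
  have hqi1 : q⁻¹ < 1 := by rw [inv_lt_one_iff₀]; right; exact hq1
  have hqi0 : (0:ℝ) < q⁻¹ := inv_pos.mpr hq0
  have hqir1 : q⁻¹ * r < 1 := by nlinarith
  simp only [hpma_eq, hpam_eq, hpmam_eq]
  set c1 : ℝ := (1 - q) / (1 - q⁻¹ * r) * ((1 - q⁻¹) / (1 - q * r)) with hc1
  set C : ℝ := (1 - r) * (1 / (1 - q⁻¹)) with hC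
  set μ : Measure ℚ_[p] := padicHaar p with hμdef
  -- basic sign facts
  have hc1neg : c1 ≤ 0 := by
    rw [hc1]
    apply mul_nonpos_of_nonpos_of_nonneg
    · exact (div_nonpos_iff.mpr (Or.inr ⟨by linarith, by linarith⟩))
    · exact le_of_lt (div_pos (by linarith) (by linarith))
  have hC1 : 1 ≤ C := by
    rw [hC, mul_one_div]
    rw [le_div_iff₀ (by linarith)]
    have : (p:ℝ) ^ (-1:ℝ) ≤ (p:ℝ) ^ (-α) := by
      apply Real.rpow_le_rpow_of_exponent_le hp1.le
      linarith
    rw [Real.rpow_neg_one, hpma_eq] at this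
    rw [one_mul, ← hrdef] at *
    linarith
  have hkey : ∀ t : ℝ, 0 < t → t < 1 → 0 ≤ c1 * (1 - C * t ^ (α - 1)) := by
    intro t ht0 ht1
    have h1 : 1 ≤ t ^ (α - 1) :=
      Real.one_le_rpow_of_pos_of_le_one_of_nonpos ht0 ht1.le (by linarith)
    have h2 : 1 ≤ C * t ^ (α - 1) := by nlinarith
    nlinarith
  -- the explicit integrand
  set F : ℚ_[p] → ℝ := fun τ => if ‖τ‖ < 1 ∧ τ ≠ 0 then c1 * (1 - C * ‖τ‖ ^ (α - 1)) else 0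
    with hF
  have hFnonneg : ∀ τ, 0 ≤ F τ := by
    intro τ
    rw [hF]
    dsimp only
    split_ifs with h
    · exact hkey _ (norm_pos_iff.mpr h.2) h.1
    · exact le_refl 0
  have hFmeas : Measurable F := by
    apply Measurable.ite
    · exact (measurableSet_lt measurable_norm measurable_const).inter
        (measurableSet_singleton (0:ℚ_[p])).compl
    · exact (measurable_const.mul
        (measurable_const.sub (measurable_const.mul (measurable_norm.pow_const _))))
    · exact measurable_const
  -- measure of {0} is zero
  have hzero : μ {(0:ℚ_[p])} = 0 := by
    have hle : ∀ n : ℕ, μ {(0:ℚ_[p])} ≤ ((p:ℝ≥0∞))⁻¹ ^ n := by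
      intro n
      rw [hμdef, ← padicHaar_ball p n]
      apply measure_mono
      intro x hx
      simp only [Set.mem_singleton_iff] at hx
      subst hx
      simp only [Set.mem_setOf_eq, norm_zero]
      positivity
    have htend : Tendsto (fun n : ℕ => ((p:ℝ≥0∞))⁻¹ ^ n) atTop (nhds 0) := by
      apply ENNReal.tendsto_pow_atTop_nhds_zero_of_lt_one
      rw [ENNReal.inv_lt_one]
      exact_mod_cast (Fact.out : p.Prime).one_lt
    simpa using ge_of_tendsto' htend hle
  -- integrand equals F almost everywhere
  have hcongr : (fun τ => c1 * R τ) =ᵐ[μ] F := by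
    have hsub : {τ : ℚ_[p] | ¬ c1 * R τ = F τ} ⊆ {(0:ℚ_[p])} := by
      intro τ hτ
      simp only [Set.mem_setOf_eq] at hτ
      by_contra h0
      simp only [Set.mem_singleton_iff] at h0
      rcases lt_or_ge ‖τ‖ 1 with h | h
      · apply hτ
        rw [hRlt τ h0 h, hF]
        dsimp only
        rw [if_pos (show ‖τ‖ < 1 ∧ τ ≠ 0 from ⟨h, h0⟩), hC, hpma_eq, one_div (p:ℝ), ← hrdef]
      · apply hτ
        rw [hRge τ h, hF]
        dsimp only
        rw [if_neg (show ¬(‖τ‖ < 1 ∧ τ ≠ 0) from fun hc => absurd hc.1 (not_lt.mpr h)),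
          mul_zero]
    exact (MeasureTheory.ae_iff).mpr (measure_mono_null hsub hzero)
  rw [integral_congr_ae hcongr,
    MeasureTheory.integral_eq_lintegral_of_nonneg_ae (.of_forall hFnonneg)
      hFmeas.aestronglyMeasurable]
  -- spheres
  set S : ℕ → Set ℚ_[p] := fun n => {x : ℚ_[p] | ‖x‖ = (p:ℝ) ^ (-((n+1:ℕ):ℤ))} with hS
  have htn : ∀ n : ℕ, (0:ℝ) < (p:ℝ) ^ (-((n+1:ℕ):ℤ)) ∧ (p:ℝ) ^ (-((n+1:ℕ):ℤ)) < 1 := by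
    intro n
    constructor
    · positivity
    · calc (p:ℝ) ^ (-((n+1:ℕ):ℤ)) < (p:ℝ) ^ (0:ℤ) := by
            apply zpow_lt_zpow_right₀ hp1
            omega
        _ = 1 := zpow_zero _
  have hSmeas : ∀ n, MeasurableSet (S n) := fun n =>
    measurable_norm (measurableSet_singleton _)
  have hSd : Pairwise (Function.onFun Disjoint S) := by
    intro i j hij
    refine Set.disjoint_left.mpr fun x hxi hxj => hij ?_
    simp only [hS, Set.mem_setOf_eq] at hxi hxj
    have := hxi.symm.trans hxj
    rw [zpow_right_inj₀ hp0 (ne_of_gt hp1)] at this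
    omega
  have hsupp : ∀ τ, τ ∉ ⋃ n, S n → F τ = 0 := by
    intro τ hτ
    by_contra hne
    rw [hF] at hne
    dsimp only at hne
    split_ifs at hne with hcond
    · obtain ⟨h1, h2⟩ := hcond
      have hval : ‖τ‖ = (p:ℝ) ^ (-τ.valuation) := Padic.norm_eq_zpow_neg_valuation h2
      have hvpos : 1 ≤ τ.valuation := by
        rw [hval] at h1
        have : (p:ℝ) ^ (-τ.valuation) < (p:ℝ) ^ (0:ℤ) := by rwa [zpow_zero]
        rw [zpow_lt_zpow_iff_right₀ hp1] at this
        omega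
      apply hτ
      refine Set.mem_iUnion.mpr ⟨(τ.valuation - 1).toNat, ?_⟩
      simp only [hS, Set.mem_setOf_eq, hval]
      congr 1
      omega
    · exact hne rfl
  -- reduce the lintegral to a sum over spheres
  have hindic : (fun a => ENNReal.ofReal (F a))
      = (⋃ n, S n).indicator (fun a => ENNReal.ofReal (F a)) := by
    funext a
    by_cases ha : a ∈ ⋃ n, S n
    · rw [Set.indicator_of_mem ha]
    · rw [Set.indicator_of_notMem ha, hsupp a ha, ENNReal.ofReal_zero]
  rw [hindic, lintegral_indicator (MeasurableSet.iUnion hSmeas),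
    lintegral_iUnion hSmeas hSd]
  -- compute the integral over each sphere
  set g : ℕ → ℝ := fun n =>
    (c1 * (1 - C * ((p:ℝ) ^ (-((n+1:ℕ):ℤ))) ^ (α - 1)))
      * ((p:ℝ) ^ (-((n+1:ℕ):ℤ)) - (p:ℝ) ^ (-((n+1:ℕ):ℤ) - 1)) with hg
  have hsp : ∀ n, ∫⁻ a in S n, ENNReal.ofReal (F a) ∂μ = ENNReal.ofReal (g n) := by
    intro n
    have hconst : ∀ x ∈ S n, ENNReal.ofReal (F x)
        = ENNReal.ofReal (c1 * (1 - C * ((p:ℝ) ^ (-((n+1:ℕ):ℤ))) ^ (α - 1))) := by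
      intro x hx
      simp only [hS, Set.mem_setOf_eq] at hx
      have hx0 : x ≠ 0 := by
        intro h
        rw [h, norm_zero] at hx
        exact absurd hx.symm (ne_of_gt (htn n).1)
      have hx1 : ‖x‖ < 1 := by rw [hx]; exact (htn n).2
      rw [hF]
      dsimp only
      rw [if_pos (show ‖x‖ < 1 ∧ x ≠ 0 from ⟨hx1, hx0⟩), hx]
    rw [setLIntegral_congr_fun_ae (hSmeas n) (MeasureTheory.ae_of_all _ hconst),
      setLIntegral_const, hμdef]
    have : padicHaar p (S n) = ENNReal.ofReal ((p:ℝ) ^ (-((n+1:ℕ):ℤ)) - (p:ℝ) ^ (-((n+1:ℕ):ℤ) - 1)) :=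
      padicHaar_sphere p (n+1)
    rw [this, ← ENNReal.ofReal_mul (hkey _ (htn n).1 (htn n).2), hg]
  rw [tsum_congr hsp]
  -- rewrite g in geometric form
  set w : ℝ := (p:ℝ) ^ (1 - α) with hw
  have hwr : w * r = q⁻¹ := by
    rw [hw, hrdef, ← Real.rpow_neg_one (p:ℝ), ← Real.rpow_add hp0, ← hpma_eq]
    congr 1
    ring
  have hg' : ∀ n, g n = (c1 * (1 - r)) * r ^ (n+1) - (c1 * (1 - r) * C) * (q⁻¹) ^ (n+1) := by
    intro n
    have e1 : ((p:ℝ) ^ (-((n+1:ℕ):ℤ))) ^ (α - 1) = w ^ (n+1) := by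
      have h1 : ((p:ℝ) ^ (-((n+1:ℕ):ℤ)) : ℝ) = (p:ℝ) ^ ((-((n+1:ℕ)) : ℝ)) := by
        rw [← Real.rpow_intCast]
        norm_num
      rw [h1, ← Real.rpow_mul hp0.le, hw, ← Real.rpow_natCast ((p:ℝ) ^ (1-α)) (n+1),
        ← Real.rpow_mul hp0.le]
      congr 1
      push_cast
      ring
    have e2 : (p:ℝ) ^ (-((n+1:ℕ):ℤ)) = r ^ (n+1) := by
      rw [zpow_neg, ← inv_zpow, zpow_natCast, hrdef]
    have e3 : (p:ℝ) ^ (-((n+1:ℕ):ℤ) - 1) = r ^ (n+2) := by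
      rw [show (-((n+1:ℕ):ℤ) - 1) = -((n+2:ℕ):ℤ) by push_cast; ring,
        zpow_neg, ← inv_zpow, zpow_natCast, hrdef]
    have e4 : (q⁻¹ : ℝ) ^ (n+1) = w ^ (n+1) * r ^ (n+1) := by rw [← mul_pow, hwr]
    rw [hg]
    dsimp only
    rw [e1, e2, e3, e4]
    ring
  have hgeo : ∀ x : ℝ, 0 ≤ x → x < 1 →
      Summable (fun n : ℕ => x ^ (n+1)) ∧ (∑' n : ℕ, x ^ (n+1)) = x * (1-x)⁻¹ := by
    intro x h0 h1
    have he : (fun n : ℕ => x ^ (n+1)) = fun n : ℕ => x * x ^ n := by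
      funext n; ring
    constructor
    · rw [he]; exact (summable_geometric_of_lt_one h0 h1).mul_left x
    · rw [he, tsum_mul_left, tsum_geometric_of_lt_one h0 h1]
  have hsum1 := hgeo r hr0.le hr1
  have hsum2 := hgeo q⁻¹ hqi0.le hqi1
  have hgsummable : Summable g := by
    rw [funext hg']
    exact ((hsum1.1.mul_left _).sub (hsum2.1.mul_left _))
  have hgnonneg : ∀ n, 0 ≤ g n := by
    intro n
    rw [hg]
    dsimp only
    apply mul_nonneg (hkey _ (htn n).1 (htn n).2)
    rw [sub_nonneg]
    apply zpow_le_zpow_right₀ hp1.le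
    omega
  have htsum : (∑' n, g n) = 1 := by
    rw [tsum_congr hg', Summable.tsum_sub (hsum1.1.mul_left _) (hsum2.1.mul_left _),
      tsum_mul_left, tsum_mul_left, hsum1.2, hsum2.2, hc1, hC]
    exact key_identity q r hq1 hr0 hr1 hqr1
  rw [← ENNReal.ofReal_tsum_of_nonneg hgnonneg hgsummable, htsum]
  simp
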